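/- If P ∈ Π̂_n is regular (i.e., f ↦ π(f ∘ σ(P)) is injective on F), then P is not a torsion element: Q ∘ P = 0 with Q ∈ D̂_n^sym implies Q = 0. -/

import Mathlib

/-!
STATEMENT 15: If `P ∈ Π̂ₙ` is regular (i.e. `f ↦ π(f ∘ σ(P))` is injective on
`F`), then `P` is not a torsion element: `Q ∘ P = 0` with `Q ∈ D̂ₙ^sym`
implies `Q = 0`.  Here `n = m+1`, `Π̂ₙ` consists of series
`Σ_{s∈ℤ} a_s ∂ₙ^s` (`a_s` not involving `∂ₙ`) of finite order, a left
`D̂ₙ^sym`-module.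
-/

open MvPowerSeries

noncomputable section

variable {K : Type*} [Field K] [CharZero K] {m : ℕ}

def dg {m : ℕ} (k : Fin m → ℕ) : ℕ := ∑ i, k i

def dgF {N : ℕ} (μ : Fin N →₀ ℕ) : ℕ := μ.sum fun _ e => e

/-- elements of `Π̂ₙ` (`n = m+1`): coefficients indexed by
`(∂₁,…,∂_{n−1})`-exponents in `ℕ^m` and a `∂ₙ`-exponent in `ℤ` -/
abbrev PiOp (m : ℕ) (K : Type*) [Field K] :=
  ((Fin m → ℕ) × ℤ) → MvPowerSeries (Fin (m + 1)) K

/-- elements of `D̂ₙ^sym`, with the `∂ₙ`-exponent split off in `ℕ` -/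
abbrev DOp (m : ℕ) (K : Type*) [Field K] :=
  ((Fin m → ℕ) × ℕ) → MvPowerSeries (Fin (m + 1)) K

/-- the order function on `Π̂ₙ` -/
def ordPi (P : PiOp m K) : EReal :=
  ⨆ (ks : (Fin m → ℕ) × ℤ) (μ : Fin (m + 1) →₀ ℕ)
    (_ : MvPowerSeries.coeff μ (P ks) ≠ 0),
    ((((dg ks.1 : ℤ) + ks.2 - (dgF μ : ℤ) : ℤ) : ℝ) : EReal)

/-- the order function on `D̂ₙ^sym` -/
def ordD (Q : DOp m K) : EReal :=
  ⨆ (kt : (Fin m → ℕ) × ℕ) (μ : Fin (m + 1) →₀ ℕ)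
    (_ : MvPowerSeries.coeff μ (Q kt) ≠ 0),
    ((((dg kt.1 : ℤ) + (kt.2 : ℤ) - (dgF μ : ℤ) : ℤ) : ℝ) : EReal)

def Dmulti (j : Fin (m + 1) → ℕ) (b : MvPowerSeries (Fin (m + 1)) K) :
    MvPowerSeries (Fin (m + 1)) K :=
  fun ν => (∏ i, (((ν i + j i).factorial / (ν i).factorial : ℕ) : K)) *
    MvPowerSeries.coeff (ν + Finsupp.equivFunOnFinite.symm j) b

open Classical in
/-- the left action of `D̂ₙ^sym` on `Π̂ₙ` given by the Leibniz rule,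
computed coefficientwise -/
def opAct (Q : DOp m K) (A : PiOp m K) : PiOp m K :=
  fun ks => fun μ =>
    ∑ᶠ (k1 : (Fin m → ℕ) × ℕ) (j : (Fin m → ℕ) × ℕ),
      if j.1 ≤ k1.1 ∧ j.2 ≤ k1.2 ∧ (fun a => k1.1 a - j.1 a) ≤ ks.1 then
        (((∏ a, ((k1.1 a).choose (j.1 a))) * (k1.2.choose j.2) : ℕ) : K) *
          MvPowerSeries.coeff μ
            (Q k1 * Dmulti (Fin.snoc j.1 j.2)
              (A (fun a => ks.1 a - (k1.1 a - j.1 a), ks.2 - ((k1.2 : ℤ) - (j.2 : ℤ)))))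
      else 0

open Classical in
/-- the highest symbol `σ(P)` of `P ∈ Π̂ₙ` with `ord P = d`: its homogeneous
component of ord-degree `d` -/
def compPi (P : PiOp m K) (d : ℤ) : PiOp m K :=
  fun ks => fun μ =>
    if ((dg ks.1 : ℤ) + ks.2 - (dgF μ : ℤ)) = d then MvPowerSeries.coeff μ (P ks) else 0

/-- the projection `π : Π̂ₙ → Π̂ₙ/(x₁,…,xₙ)Π̂ₙ = Vₙ ∩ Πₙ` -/
def piPi (A : PiOp m K) : ((Fin m → ℕ) × ℤ) → K :=
  fun ks => MvPowerSeries.constantCoeff (A ks)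

/-- the lift of an element of `F` (finitely supported constant coefficients)
to a constant-coefficient operator in `D̂ₙ^sym` -/
def liftD (f : ((Fin m → ℕ) × ℕ) →₀ K) : DOp m K :=
  fun kt => MvPowerSeries.C (f kt)

section AuxLemmas

variable {K : Type*} [Field K] [CharZero K] {m : ℕ}

lemma dgF_add {N : ℕ} (a b : Fin N →₀ ℕ) : dgF (a + b) = dgF a + dgF b :=
  Finsupp.sum_add_index' (fun _ => rfl) (fun _ _ _ => rfl)

lemma dgF_eq_zero {N : ℕ} {μ : Fin N →₀ ℕ} (h : dgF μ = 0) : μ = 0 := by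
  ext i
  simp only [Finsupp.coe_zero, Pi.zero_apply]
  by_contra hi
  have hmem : i ∈ μ.support := Finsupp.mem_support_iff.2 hi
  have : μ i ≤ dgF μ := Finset.single_le_sum (fun _ _ => Nat.zero_le _) hmem
  omega

lemma dgF_snoc (j1 : Fin m → ℕ) (j2 : ℕ) :
    dgF (Finsupp.equivFunOnFinite.symm (Fin.snoc j1 j2)) = dg j1 + j2 := by
  unfold dgF dg
  rw [Finsupp.sum_fintype _ _ (fun _ => rfl)]
  simp only [Finsupp.coe_equivFunOnFinite_symm]
  rw [Fin.sum_univ_castSucc]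
  simp [Fin.snoc_castSucc, Fin.snoc_last]

lemma coeff_Dmulti (ν : Fin (m+1) →₀ ℕ) (j : Fin (m+1) → ℕ) (b : MvPowerSeries (Fin (m+1)) K) :
    MvPowerSeries.coeff ν (Dmulti j b) =
      (∏ i, (((ν i + j i).factorial / (ν i).factorial : ℕ) : K)) *
        MvPowerSeries.coeff (ν + Finsupp.equivFunOnFinite.symm j) b := rfl

lemma coeff_compPi (P : PiOp m K) (d : ℤ) (ks : (Fin m → ℕ) × ℤ) (μ : Fin (m+1) →₀ ℕ) :
    MvPowerSeries.coeff μ (compPi P d ks) =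
      if ((dg ks.1 : ℤ) + ks.2 - (dgF μ : ℤ)) = d then MvPowerSeries.coeff μ (P ks) else 0 := rfl

lemma harith (ks : (Fin m → ℕ) × ℤ) (k1 j : (Fin m → ℕ) × ℕ)
    (hj1 : j.1 ≤ k1.1) (hks1 : (fun a => k1.1 a - j.1 a) ≤ ks.1)
    (ι : (Fin m → ℕ) × ℤ)
    (hι1 : ∀ a, ι.1 a = ks.1 a - (k1.1 a - j.1 a))
    (hι2 : ι.2 = ks.2 - ((k1.2 : ℤ) - (j.2 : ℤ)))
    (μ₀ μ₁ μ₂ : Fin (m+1) →₀ ℕ) (hμ : μ₁ + μ₂ = μ₀) :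
    ((dg k1.1 : ℤ) + (k1.2 : ℤ) - dgF μ₁) +
      ((dg ι.1 : ℤ) + ι.2 - dgF (μ₂ + Finsupp.equivFunOnFinite.symm (Fin.snoc j.1 j.2))) =
    (dg ks.1 : ℤ) + ks.2 - dgF μ₀ := by
  have h1 : (dg ι.1 : ℤ) = (dg ks.1 : ℤ) - dg k1.1 + dg j.1 := by
    unfold dg
    push_cast
    rw [← Finset.sum_sub_distrib, ← Finset.sum_add_distrib]
    apply Finset.sum_congr rfl
    intro a _
    have h : j.1 a ≤ k1.1 a := hj1 a
    have h' : k1.1 a - j.1 a ≤ ks.1 a := hks1 a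
    have h'' := hι1 a
    omega
  have h2 : dgF (μ₂ + Finsupp.equivFunOnFinite.symm (Fin.snoc j.1 j.2)) = dgF μ₂ + (dg j.1 + j.2) := by
    rw [dgF_add, dgF_snoc]
  have h3 : dgF μ₁ + dgF μ₂ = dgF μ₀ := by rw [← dgF_add, hμ]
  rw [hι2]
  omega

end AuxLemmas


lemma term_zero (P : PiOp m K) (d : ℤ) (Q : DOp m K) (e : ℤ) (μ₀ : Fin (m+1) →₀ ℕ)
    (f : ((Fin m → ℕ) × ℕ) →₀ K)
    (hfapp : ∀ kt, f kt = if (dg kt.1 : ℤ) + (kt.2 : ℤ) - dgF μ₀ = e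
      then MvPowerSeries.coeff μ₀ (Q kt) else 0)
    (ks : (Fin m → ℕ) × ℤ) (hks : (dg ks.1 : ℤ) + ks.2 - dgF μ₀ ≠ e + d)
    (k1 j : (Fin m → ℕ) × ℕ) (hj1 : j.1 ≤ k1.1)
    (hks1 : (fun a => k1.1 a - j.1 a) ≤ ks.1)
    (ι : (Fin m → ℕ) × ℤ)
    (hι1 : ∀ a, ι.1 a = ks.1 a - (k1.1 a - j.1 a))
    (hι2 : ι.2 = ks.2 - ((k1.2 : ℤ) - (j.2 : ℤ))) :
    MvPowerSeries.coeff 0 (liftD f k1 * Dmulti (Fin.snoc j.1 j.2) (compPi P d ι)) = 0 := by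
  simp only [liftD]
  rw [MvPowerSeries.coeff_C_mul, coeff_Dmulti, coeff_compPi]
  by_cases hf : f k1 = 0
  · rw [hf, zero_mul]
  by_cases hcP : (dg ι.1 : ℤ) + ι.2 - (dgF ((0 : Fin (m+1) →₀ ℕ) + Finsupp.equivFunOnFinite.symm (Fin.snoc j.1 j.2)) : ℤ) = d
  · exfalso
    apply hks
    have h1 : (dg k1.1 : ℤ) + (k1.2 : ℤ) - dgF μ₀ = e := by
      by_contra hne
      exact hf (by rw [hfapp k1, if_neg hne])
    have hsum := harith ks k1 j hj1 hks1 ι hι1 hι2 μ₀ μ₀ 0 (add_zero μ₀)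
    omega
  · rw [if_neg hcP, mul_zero, mul_zero]

lemma term_eq (P : PiOp m K) (d : ℤ) (Q : DOp m K) (e : ℤ) (μ₀ : Fin (m+1) →₀ ℕ)
    (f : ((Fin m → ℕ) × ℕ) →₀ K)
    (hPbd : ∀ ks μ, MvPowerSeries.coeff μ (P ks) ≠ 0 →
      (dg ks.1 : ℤ) + ks.2 - dgF μ ≤ d)
    (hQbd : ∀ kt μ, MvPowerSeries.coeff μ (Q kt) ≠ 0 →
      (dg kt.1 : ℤ) + (kt.2 : ℤ) - dgF μ ≤ e)
    (hmin : ∀ μ kt, MvPowerSeries.coeff μ (Q kt) ≠ 0 →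
      (dg kt.1 : ℤ) + (kt.2 : ℤ) - dgF μ = e → dgF μ₀ ≤ dgF μ)
    (hfapp : ∀ kt, f kt = if (dg kt.1 : ℤ) + (kt.2 : ℤ) - dgF μ₀ = e
      then MvPowerSeries.coeff μ₀ (Q kt) else 0)
    (ks : (Fin m → ℕ) × ℤ) (hks : (dg ks.1 : ℤ) + ks.2 - dgF μ₀ = e + d)
    (k1 j : (Fin m → ℕ) × ℕ) (hj1 : j.1 ≤ k1.1)
    (hks1 : (fun a => k1.1 a - j.1 a) ≤ ks.1)
    (ι : (Fin m → ℕ) × ℤ)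
    (hι1 : ∀ a, ι.1 a = ks.1 a - (k1.1 a - j.1 a))
    (hι2 : ι.2 = ks.2 - ((k1.2 : ℤ) - (j.2 : ℤ))) :
    MvPowerSeries.coeff 0 (liftD f k1 * Dmulti (Fin.snoc j.1 j.2) (compPi P d ι)) =
      MvPowerSeries.coeff μ₀ (Q k1 * Dmulti (Fin.snoc j.1 j.2) (P ι)) := by
  classical
  have hzero : ∀ x ∈ Finset.HasAntidiagonal.antidiagonal μ₀, x ≠ (μ₀, (0 : Fin (m+1) →₀ ℕ)) →
      MvPowerSeries.coeff x.1 (Q k1) *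
        MvPowerSeries.coeff x.2 (Dmulti (Fin.snoc j.1 j.2) (P ι)) = 0 := by
    rintro ⟨μ₁, μ₂⟩ hmem hne
    by_contra hterm
    have hQc : MvPowerSeries.coeff μ₁ (Q k1) ≠ 0 := left_ne_zero_of_mul hterm
    have hDc : MvPowerSeries.coeff μ₂ (Dmulti (Fin.snoc j.1 j.2) (P ι)) ≠ 0 :=
      right_ne_zero_of_mul hterm
    have hPc : MvPowerSeries.coeff
        (μ₂ + Finsupp.equivFunOnFinite.symm (Fin.snoc j.1 j.2)) (P ι) ≠ 0 := by
      intro h0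
      exact hDc (by rw [coeff_Dmulti, h0, mul_zero])
    have hd1 := hQbd k1 μ₁ hQc
    have hd2 := hPbd ι _ hPc
    have hμeq : μ₁ + μ₂ = μ₀ := Finset.HasAntidiagonal.mem_antidiagonal.1 hmem
    have hsum := harith ks k1 j hj1 hks1 ι hι1 hι2 μ₀ μ₁ μ₂ hμeq
    have hq : (dg k1.1 : ℤ) + (k1.2 : ℤ) - dgF μ₁ = e := by omega
    have hge := hmin μ₁ k1 hQc hq
    have hsplit : dgF μ₁ + dgF μ₂ = dgF μ₀ := by rw [← dgF_add, hμeq]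
    have hμ₂0 : μ₂ = 0 := dgF_eq_zero (by omega)
    subst hμ₂0
    rw [add_zero] at hμeq
    subst hμeq
    exact hne rfl
  simp only [liftD]
  rw [MvPowerSeries.coeff_C_mul, MvPowerSeries.coeff_mul,
    Finset.sum_eq_single_of_mem (μ₀, (0 : Fin (m+1) →₀ ℕ))
      (Finset.HasAntidiagonal.mem_antidiagonal.2 (add_zero μ₀)) hzero]
  dsimp only
  rw [coeff_Dmulti, coeff_Dmulti]
  rw [mul_left_comm, mul_left_comm (MvPowerSeries.coeff μ₀ (Q k1))]
  congr 1
  rw [coeff_compPi, hfapp k1]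
  by_cases hQc : MvPowerSeries.coeff μ₀ (Q k1) = 0
  · split_ifs <;> simp [hQc]
  by_cases hPcoeff : MvPowerSeries.coeff
      ((0 : Fin (m+1) →₀ ℕ) + Finsupp.equivFunOnFinite.symm (Fin.snoc j.1 j.2)) (P ι) = 0
  · rw [zero_add] at hPcoeff
    split_ifs <;> simp [hPcoeff]
  · have hd1 := hQbd k1 μ₀ hQc
    have hd2 := hPbd ι _ hPcoeff
    have hsum := harith ks k1 j hj1 hks1 ι hι1 hι2 μ₀ μ₀ 0 (add_zero μ₀)
    have h1 : (dg k1.1 : ℤ) + (k1.2 : ℤ) - dgF μ₀ = e := by omega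
    have h2 : (dg ι.1 : ℤ) + ι.2 -
        (dgF ((0 : Fin (m+1) →₀ ℕ) + Finsupp.equivFunOnFinite.symm (Fin.snoc j.1 j.2)) : ℤ) = d := by
      omega
    rw [if_pos h1, if_pos h2]

/-- If `P ∈ Π̂ₙ` is regular — `ord P = d` and
`f ↦ π(f ∘ σ(P))` is injective on `F` — then `Q ∘ P = 0` with
`Q ∈ D̂ₙ^sym` implies `Q = 0`. -/
theorem regular_not_torsion
    (P : PiOp m K) (d : ℤ) (hd : ordPi P = (((d : ℝ)) : EReal))
    (hreg : ∀ f : ((Fin m → ℕ) × ℕ) →₀ K, f ≠ 0 →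
      piPi (opAct (liftD f) (compPi P d)) ≠ 0) :
    ∀ Q : DOp m K, ordD Q ≠ ⊤ → opAct Q P = 0 → Q = 0 := by
  intro Q hQtop hQP
  by_contra hQ0
  classical
  -- the order bound on P
  have hPbd : ∀ (ks : (Fin m → ℕ) × ℤ) (μ : Fin (m+1) →₀ ℕ),
      MvPowerSeries.coeff μ (P ks) ≠ 0 → (dg ks.1 : ℤ) + ks.2 - dgF μ ≤ d := by
    intro ks μ h
    have hle : ((((dg ks.1 : ℤ) + ks.2 - (dgF μ : ℤ) : ℤ) : ℝ) : EReal) ≤ ordPi P :=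
      le_iSup_of_le ks (le_iSup_of_le μ (le_iSup_of_le h le_rfl))
    rw [hd] at hle
    exact_mod_cast hle
  -- the degree set of Q has a greatest element e
  have hinh : ∃ z : ℤ, ∃ kt μ, MvPowerSeries.coeff μ (Q kt) ≠ 0 ∧
      (dg kt.1 : ℤ) + (kt.2 : ℤ) - dgF μ = z := by
    have h1 : ∃ kt, Q kt ≠ 0 := by
      by_contra h; push_neg at h; exact hQ0 (funext h)
    obtain ⟨kt, hkt⟩ := h1
    have h2 : ∃ μ, MvPowerSeries.coeff μ (Q kt) ≠ 0 := by
      by_contra h; push_neg at h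
      exact hkt (MvPowerSeries.ext fun μ => by rw [h μ, map_zero])
    obtain ⟨μ, hμ⟩ := h2
    exact ⟨_, kt, μ, hμ, rfl⟩
  have hbdd : ∃ b : ℤ, ∀ z : ℤ, (∃ kt μ, MvPowerSeries.coeff μ (Q kt) ≠ 0 ∧
      (dg kt.1 : ℤ) + (kt.2 : ℤ) - dgF μ = z) → z ≤ b := by
    obtain ⟨r, hr1, -⟩ := EReal.exists_between_coe_real hQtop.lt_top
    refine ⟨⌈r⌉, fun z hz => ?_⟩
    obtain ⟨kt, μ, hc, hdeg⟩ := hz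
    have hle : ((((dg kt.1 : ℤ) + (kt.2 : ℤ) - (dgF μ : ℤ) : ℤ) : ℝ) : EReal) ≤ ordD Q :=
      le_iSup_of_le kt (le_iSup_of_le μ (le_iSup_of_le hc le_rfl))
    have h2 : ((z : ℝ) : EReal) < ((r : ℝ) : EReal) := by
      rw [← hdeg]; exact lt_of_le_of_lt hle hr1
    have h3 : (z : ℝ) < r := by exact_mod_cast h2
    have := Int.ceil_le_ceil h3.le
    simpa using this
  obtain ⟨e, he, hemax⟩ := Int.exists_greatest_of_bdd hbdd hinh
  have hQbd : ∀ (kt : (Fin m → ℕ) × ℕ) (μ : Fin (m+1) →₀ ℕ),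
      MvPowerSeries.coeff μ (Q kt) ≠ 0 → (dg kt.1 : ℤ) + (kt.2 : ℤ) - dgF μ ≤ e :=
    fun kt μ h => hemax _ ⟨kt, μ, h, rfl⟩
  -- pick a top coefficient with minimal x-degree
  have hminex : ∃ n : ℕ, ∃ (μ : Fin (m+1) →₀ ℕ) (kt : (Fin m → ℕ) × ℕ),
      MvPowerSeries.coeff μ (Q kt) ≠ 0 ∧ (dg kt.1 : ℤ) + (kt.2 : ℤ) - dgF μ = e ∧
        dgF μ = n := by
    obtain ⟨kt, μ, hc, hdeg⟩ := he
    exact ⟨dgF μ, μ, kt, hc, hdeg, rfl⟩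
  obtain ⟨μ₀, kt₀, hc₀, hdeg₀, hn₀⟩ := Nat.find_spec hminex
  have hmin : ∀ (μ : Fin (m+1) →₀ ℕ) (kt : (Fin m → ℕ) × ℕ),
      MvPowerSeries.coeff μ (Q kt) ≠ 0 →
      (dg kt.1 : ℤ) + (kt.2 : ℤ) - dgF μ = e → dgF μ₀ ≤ dgF μ := by
    intro μ kt h1 h2
    rw [hn₀]
    exact Nat.find_min' hminex ⟨μ, kt, h1, h2, rfl⟩
  -- the element f of F
  set g : ((Fin m → ℕ) × ℕ) → K := fun kt =>
    if (dg kt.1 : ℤ) + (kt.2 : ℤ) - dgF μ₀ = e then MvPowerSeries.coeff μ₀ (Q kt)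
    else 0 with hg
  have hgfin : (Function.support g).Finite := by
    set N : ℕ := (e + dgF μ₀).toNat with hN
    have h1 : (Set.univ.pi fun _ : Fin m => Set.Iic N).Finite :=
      Set.Finite.pi fun _ => Set.finite_Iic N
    apply (h1.prod (Set.finite_Iic N)).subset
    rintro ⟨k, t⟩ hkt
    have hne : g (k, t) ≠ 0 := hkt
    have hdeg : (dg k : ℤ) + (t : ℤ) - dgF μ₀ = e := by
      by_contra hne2
      exact hne (by rw [hg]; exact if_neg hne2)
    have hNeq : (dg k : ℤ) + t = e + dgF μ₀ := by omega
    constructor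
    · intro a _
      have hle : k a ≤ dg k :=
        Finset.single_le_sum (f := fun i => k i) (fun _ _ => Nat.zero_le _) (Finset.mem_univ a)
      simp only [Set.mem_Iic]
      omega
    · simp only [Set.mem_Iic]
      omega
  set f : ((Fin m → ℕ) × ℕ) →₀ K := Finsupp.ofSupportFinite g hgfin with hfdef
  have hfapp : ∀ kt, f kt = if (dg kt.1 : ℤ) + (kt.2 : ℤ) - dgF μ₀ = e
      then MvPowerSeries.coeff μ₀ (Q kt) else 0 := fun kt => rfl
  have hfne : f ≠ 0 := by
    intro h0
    apply hc₀
    have h1 := hfapp kt₀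
    rw [h0, if_pos hdeg₀] at h1
    exact h1.symm.trans (by simp)
  apply hreg f hfne
  funext ks
  simp only [piPi, Pi.zero_apply]
  rw [← MvPowerSeries.coeff_zero_eq_constantCoeff_apply, MvPowerSeries.coeff_apply]
  by_cases hks : (dg ks.1 : ℤ) + ks.2 - dgF μ₀ = e + d
  · -- top case: the value coincides with a coefficient of Q ∘ P, which vanishes
    have h0 : opAct Q P ks μ₀ = 0 := by rw [hQP]; rfl
    refine Eq.trans ?_ h0
    simp only [opAct]
    refine finsum_congr fun k1 => finsum_congr fun j => ?_
    by_cases hcond : j.1 ≤ k1.1 ∧ j.2 ≤ k1.2 ∧ (fun a => k1.1 a - j.1 a) ≤ ks.1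
    · rw [if_pos hcond, if_pos hcond]
      obtain ⟨hj1, hj2, hks1⟩ := hcond
      congr 1
      exact term_eq P d Q e μ₀ f hPbd hQbd hmin hfapp ks hks k1 j hj1 hks1 _
        (fun a => rfl) rfl
    · rw [if_neg hcond, if_neg hcond]
  · -- non-top case: every term vanishes
    simp only [opAct]
    refine finsum_eq_zero_of_forall_eq_zero fun k1 => ?_
    refine finsum_eq_zero_of_forall_eq_zero fun j => ?_
    by_cases hcond : j.1 ≤ k1.1 ∧ j.2 ≤ k1.2 ∧ (fun a => k1.1 a - j.1 a) ≤ ks.1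
    · rw [if_pos hcond]
      obtain ⟨hj1, hj2, hks1⟩ := hcond
      rw [term_zero P d Q e μ₀ f hfapp ks hks k1 j hj1 hks1 _ (fun a => rfl) rfl,
        mul_zero]
    · rw [if_neg hcond]

end
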